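/- Let Ξ ⊆ ℝ^d with 0 ∈ Ξ, let Q : ℝ^d → ℝ^d be linear and bijective, and let N be a positive integer such that Q^{2N}(Ξ + Ξ) ⊆ Q^N(Ξ). Then for every positive integer k, Q^{kN}(Ξ + Ξ + ⋯ + Ξ) ⊆ Q^N(Ξ), where the sumset has k summands. -/
import Mathlib


open Pointwise

/-- If 0 ∈ Ξ, Q is linear bijective and Q^{2N}(Ξ+Ξ) ⊆ Q^N(Ξ), then
for every k ≥ 1, Q^{kN} applied to the k-fold sumset of Ξ lands in Q^N(Ξ). -/
theorem stmt8 (d : ℕ) (Ξ : Set (EuclideanSpace ℝ (Fin d)))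
    (h0 : (0 : EuclideanSpace ℝ (Fin d)) ∈ Ξ)
    (Q : EuclideanSpace ℝ (Fin d) →ₗ[ℝ] EuclideanSpace ℝ (Fin d))
    (hQ : Function.Bijective Q) (N : ℕ) (hN : 0 < N)
    (hhyp : ⇑(Q ^ (2 * N)) '' (Ξ + Ξ) ⊆ ⇑(Q ^ N) '' Ξ) :
    ∀ k : ℕ, 0 < k →
      ⇑(Q ^ (k * N)) ''
          {x | ∃ f : Fin k → EuclideanSpace ℝ (Fin d), (∀ i, f i ∈ Ξ) ∧ ∑ i, f i = x}
        ⊆ ⇑(Q ^ N) '' Ξ := by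
  intro k hk
  induction k, hk using Nat.le_induction with
  | base =>
    rintro _ ⟨x, ⟨f, hf, rfl⟩, rfl⟩
    exact ⟨f 0, hf 0, by simp [Fin.sum_univ_succ]⟩
  | succ k hk ih =>
    rintro _ ⟨x, ⟨f, hf, rfl⟩, rfl⟩
    have hy : (Q ^ (k * N)) (∑ i : Fin k, f i.castSucc) ∈ ⇑(Q ^ N) '' Ξ :=
      ih (Set.mem_image_of_mem _ ⟨fun i => f i.castSucc, fun i => hf _, rfl⟩)
    have hz : (Q ^ (k * N)) (f (Fin.last k)) ∈ ⇑(Q ^ N) '' Ξ := by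
      refine ih (Set.mem_image_of_mem _
        ⟨fun i => if i = ⟨0, hk⟩ then f (Fin.last k) else 0, ?_, ?_⟩)
      · intro i
        by_cases h : i = ⟨0, hk⟩ <;> simp [h, hf, h0]
      · simp
    obtain ⟨a, ha, hae⟩ := hy
    obtain ⟨b, hb, hbe⟩ := hz
    have key : (Q ^ ((k + 1) * N)) (∑ i : Fin (k + 1), f i)
        = (Q ^ (2 * N)) (a + b) := by
      rw [Fin.sum_univ_castSucc, show (k + 1) * N = N + k * N by ring, pow_add,
        Module.End.mul_apply, map_add, ← hae, ← hbe, ← map_add,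
        ← Module.End.mul_apply, ← pow_add, two_mul]
    rw [key]
    exact hhyp (Set.mem_image_of_mem _ (Set.add_mem_add ha hb))
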